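/- Let p, q be positive integers and let H be the (p+q+1)×(p+q+1) block matrix [[C_p, u, 0],[0, 0, vᵀ],[0, 0, C_q]], where u is a nonzero 0-1 column vector of length p and v is a nonzero 0-1 column vector of length q. Then H^{lcm(p,q)+2} has an entry greater than 1; in particular θ(H) ≤ lcm(p,q) + 1. -/
import Mathlib

/-- A matrix over ℕ is a 0-1 matrix iff all its entries are at most 1. -/
def IsZO {α β : Type*} (A : Matrix α β ℕ) : Prop := ∀ i j, A i j ≤ 1

/-- The stable index of a 0-1 matrix: the smallest positive `k` with `A ^ (k+1)`
not a 0-1 matrix, or `⊤` if no such `k` exists. -/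
noncomputable def theta {α : Type*} [Fintype α] [DecidableEq α]
    (A : Matrix α α ℕ) : ℕ∞ :=
  sInf ((fun k : ℕ => (k : ℕ∞)) '' {k : ℕ | 1 ≤ k ∧ ¬ IsZO (A ^ (k + 1))})

/-- `g(n)` from the paper. -/
def g (n : ℕ) : ℕ :=
  if n % 2 = 1 then (n ^ 2 - 1) / 4
  else if n % 4 = 0 then (n ^ 2 - 4) / 4
  else (n ^ 2 - 16) / 4

/-- Basic circulant 0-1 matrix of order `n`. -/
def Cmat (n : ℕ) : Matrix (Fin n) (Fin n) ℕ :=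
  Matrix.of fun i j => if (j : ℕ) = ((i : ℕ) + 1) % n then 1 else 0

/-- Condition (★) on `(n, p, q)`. -/
def StarCond (n p q : ℕ) : Prop :=
  p + q = n ∧
  ((n % 2 = 1 ∧ ({p, q} : Finset ℕ) = {(n + 1) / 2, (n - 1) / 2}) ∨
   (n % 4 = 0 ∧ ({p, q} : Finset ℕ) = {(n + 2) / 2, (n - 2) / 2}) ∨
   (n % 4 = 2 ∧ ({p, q} : Finset ℕ) = {(n + 4) / 2, (n - 4) / 2}))

/-- The block matrix `[[C_p, u, 0], [0, 0, vᵀ], [0, 0, C_q]]`. -/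
def Hmat (p q : ℕ) (u : Fin p → ℕ) (v : Fin q → ℕ) :
    Matrix (Fin p ⊕ Unit ⊕ Fin q) (Fin p ⊕ Unit ⊕ Fin q) ℕ :=
  Matrix.of fun i j =>
    match i, j with
    | Sum.inl a, Sum.inl b => Cmat p a b
    | Sum.inl a, Sum.inr (Sum.inl _) => u a
    | Sum.inr (Sum.inl _), Sum.inr (Sum.inr b) => v b
    | Sum.inr (Sum.inr a), Sum.inr (Sum.inr b) => Cmat q a b
    | _, _ => 0

lemma my_mul_apply_le {ι : Type*} [Fintype ι] [DecidableEq ι]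
    (A B : Matrix ι ι ℕ) (i k j : ι) : A i k * B k j ≤ (A * B) i j := by
  rw [Matrix.mul_apply]
  exact Finset.single_le_sum (f := fun k => A i k * B k j) (fun _ _ => Nat.zero_le _) (Finset.mem_univ k)

lemma my_mul_apply_le2 {ι : Type*} [Fintype ι] [DecidableEq ι]
    (A B : Matrix ι ι ℕ) (i j k1 k2 : ι) (h : k1 ≠ k2) :
    A i k1 * B k1 j + A i k2 * B k2 j ≤ (A * B) i j := by
  rw [Matrix.mul_apply]
  have h2 := Finset.sum_le_sum_of_subset
    (s := ({k1, k2} : Finset ι)) (t := Finset.univ)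
    (f := fun k => A i k * B k j) (Finset.subset_univ _)
  rwa [Finset.sum_pair h] at h2

lemma cycP (p q : ℕ) (hp : 0 < p) (u : Fin p → ℕ) (v : Fin q → ℕ)
    (m : ℕ) (a : Fin p) :
    1 ≤ ((Hmat p q u v) ^ m) (Sum.inl a)
        (Sum.inl ⟨((a : ℕ) + m) % p, Nat.mod_lt _ hp⟩) := by
  induction m with
  | zero =>
    have h : (Sum.inl ⟨((a : ℕ) + 0) % p, Nat.mod_lt _ hp⟩ :
        Fin p ⊕ Unit ⊕ Fin q) = Sum.inl a := by
      congr 1; ext; simp [Nat.mod_eq_of_lt a.isLt]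
    rw [h, pow_zero, Matrix.one_apply_eq]
  | succ m ih =>
    rw [pow_succ]
    refine le_trans ?_ (my_mul_apply_le _ _ _
      (Sum.inl ⟨((a : ℕ) + m) % p, Nat.mod_lt _ hp⟩) _)
    have hstep : (Hmat p q u v) (Sum.inl ⟨((a : ℕ) + m) % p, Nat.mod_lt _ hp⟩)
        (Sum.inl ⟨((a : ℕ) + (m + 1)) % p, Nat.mod_lt _ hp⟩) = 1 := by
      simp only [Hmat, Cmat, Matrix.of_apply]
      rw [if_pos]
      simp [Nat.mod_add_mod, ← Nat.add_assoc]
    rw [hstep, mul_one]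
    exact ih

lemma cycQ (p q : ℕ) (hq : 0 < q) (u : Fin p → ℕ) (v : Fin q → ℕ)
    (m : ℕ) (a : Fin q) :
    1 ≤ ((Hmat p q u v) ^ m) (Sum.inr (Sum.inr a))
        (Sum.inr (Sum.inr ⟨((a : ℕ) + m) % q, Nat.mod_lt _ hq⟩)) := by
  induction m with
  | zero =>
    have h : (Sum.inr (Sum.inr ⟨((a : ℕ) + 0) % q, Nat.mod_lt _ hq⟩) :
        Fin p ⊕ Unit ⊕ Fin q) = Sum.inr (Sum.inr a) := by
      congr 2; ext; simp [Nat.mod_eq_of_lt a.isLt]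
    rw [h, pow_zero, Matrix.one_apply_eq]
  | succ m ih =>
    rw [pow_succ]
    refine le_trans ?_ (my_mul_apply_le _ _ _
      (Sum.inr (Sum.inr ⟨((a : ℕ) + m) % q, Nat.mod_lt _ hq⟩)) _)
    have hstep : (Hmat p q u v) (Sum.inr (Sum.inr ⟨((a : ℕ) + m) % q, Nat.mod_lt _ hq⟩))
        (Sum.inr (Sum.inr ⟨((a : ℕ) + (m + 1)) % q, Nat.mod_lt _ hq⟩)) = 1 := by
      simp only [Hmat, Cmat, Matrix.of_apply]
      rw [if_pos]
      simp [Nat.mod_add_mod, ← Nat.add_assoc]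
    rw [hstep, mul_one]
    exact ih

theorem stmt_18 (p q : ℕ) (hp : 0 < p) (hq : 0 < q)
    (u : Fin p → ℕ) (v : Fin q → ℕ)
    (hu1 : ∀ a, u a ≤ 1) (hv1 : ∀ b, v b ≤ 1)
    (hu0 : u ≠ 0) (hv0 : v ≠ 0) :
    (∃ i j, 1 < ((Hmat p q u v) ^ (Nat.lcm p q + 2)) i j) ∧
    theta (Hmat p q u v) ≤ ((Nat.lcm p q + 1 : ℕ) : ℕ∞) := by
  obtain ⟨a0, ha0⟩ : ∃ a, u a ≠ 0 := by
    by_contra h; push_neg at h; exact hu0 (funext fun a => h a)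
  obtain ⟨b0, hb0⟩ : ∃ b, v b ≠ 0 := by
    by_contra h; push_neg at h; exact hv0 (funext fun b => h b)
  have hua : 1 ≤ u a0 := Nat.one_le_iff_ne_zero.mpr ha0
  have hvb : 1 ≤ v b0 := Nat.one_le_iff_ne_zero.mpr hb0
  set L := Nat.lcm p q with hLdef
  obtain ⟨cp, hcp⟩ : p ∣ L := Nat.dvd_lcm_left p q
  obtain ⟨cq, hcq⟩ : q ∣ L := Nat.dvd_lcm_right p q
  have hL1 : 1 ≤ L := Nat.one_le_iff_ne_zero.mpr (Nat.lcm_ne_zero hp.ne' hq.ne')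
  set H := Hmat p q u v with hHdef
  set mid : Fin p ⊕ Unit ⊕ Fin q := Sum.inr (Sum.inl ()) with hmid
  set a1 : Fin p := ⟨((a0 : ℕ) + 1) % p, Nat.mod_lt _ hp⟩ with ha1
  -- Term A : mid → b0 (via v) → around the q-cycle L steps back to b0
  have hTA : 1 ≤ (H ^ (L + 1)) mid (Sum.inr (Sum.inr b0)) := by
    have hQ := cycQ p q hq u v L b0
    have hb : (Sum.inr (Sum.inr ⟨((b0 : ℕ) + L) % q, Nat.mod_lt _ hq⟩) :
        Fin p ⊕ Unit ⊕ Fin q) = Sum.inr (Sum.inr b0) := by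
      congr 2; ext
      show ((b0 : ℕ) + L) % q = (b0 : ℕ)
      rw [hcq, Nat.add_mul_mod_self_left, Nat.mod_eq_of_lt b0.isLt]
    rw [hb] at hQ
    have hle := my_mul_apply_le H (H ^ L) mid (Sum.inr (Sum.inr b0)) (Sum.inr (Sum.inr b0))
    rw [← pow_succ'] at hle
    refine le_trans ?_ hle
    have hmv : H mid (Sum.inr (Sum.inr b0)) = v b0 := rfl
    rw [hmv]
    calc 1 = 1 * 1 := by norm_num
    _ ≤ v b0 * (H ^ L) (Sum.inr (Sum.inr b0)) (Sum.inr (Sum.inr b0)) :=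
        Nat.mul_le_mul hvb hQ
  -- Term B : a1 → (L-1 steps around p-cycle) → a0 → mid → b0
  have hTB : 1 ≤ (H ^ (L + 1)) (Sum.inl a1) (Sum.inr (Sum.inr b0)) := by
    have hP := cycP p q hp u v (L - 1) a1
    have haa : (Sum.inl ⟨((a1 : ℕ) + (L - 1)) % p, Nat.mod_lt _ hp⟩ :
        Fin p ⊕ Unit ⊕ Fin q) = Sum.inl a0 := by
      congr 1; ext
      show (((a0 : ℕ) + 1) % p + (L - 1)) % p = (a0 : ℕ)
      rw [Nat.mod_add_mod]
      have he : (a0 : ℕ) + 1 + (L - 1) = (a0 : ℕ) + p * cp := by omega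
      rw [he, Nat.add_mul_mod_self_left, Nat.mod_eq_of_lt a0.isLt]
    rw [haa] at hP
    have hsplit : H ^ (L + 1) = H ^ (L - 1) * H * H := by
      rw [← pow_succ, ← pow_succ]
      congr 1
      omega
    rw [hsplit]
    have h1 : H (Sum.inl a0) mid = u a0 := rfl
    have h2 : H mid (Sum.inr (Sum.inr b0)) = v b0 := rfl
    calc 1 = 1 * 1 * 1 := by norm_num
    _ ≤ (H ^ (L - 1)) (Sum.inl a1) (Sum.inl a0) * u a0 * v b0 :=
        Nat.mul_le_mul (Nat.mul_le_mul hP hua) hvb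
    _ = (H ^ (L - 1)) (Sum.inl a1) (Sum.inl a0) * H (Sum.inl a0) mid
          * H mid (Sum.inr (Sum.inr b0)) := by rw [h1, h2]
    _ ≤ (H ^ (L - 1) * H) (Sum.inl a1) mid * H mid (Sum.inr (Sum.inr b0)) :=
        Nat.mul_le_mul_right _ (my_mul_apply_le _ _ _ _ _)
    _ ≤ (H ^ (L - 1) * H * H) (Sum.inl a1) (Sum.inr (Sum.inr b0)) :=
        my_mul_apply_le _ _ _ _ _
  -- Key bound: the (a0, b0) entry of H^(L+2) is ≥ 2
  have key : 2 ≤ (H ^ (L + 2)) (Sum.inl a0) (Sum.inr (Sum.inr b0)) := by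
    have hsplit : H ^ (L + 2) = H * H ^ (L + 1) := (pow_succ' H (L + 1)).symm ▸ rfl
    rw [show (L + 2) = (L + 1) + 1 from rfl, pow_succ']
    refine le_trans ?_ (my_mul_apply_le2 H (H ^ (L + 1)) (Sum.inl a0)
      (Sum.inr (Sum.inr b0)) mid (Sum.inl a1) (by simp [hmid]))
    have h1 : H (Sum.inl a0) mid = u a0 := rfl
    have h2 : H (Sum.inl a0) (Sum.inl a1) = 1 := by
      show Cmat p a0 a1 = 1
      simp [Cmat, ha1]
    rw [h1, h2, one_mul]
    have hm : 1 * 1 ≤ u a0 * (H ^ (L + 1)) mid (Sum.inr (Sum.inr b0)) :=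
      Nat.mul_le_mul hua hTA
    omega
  refine ⟨⟨Sum.inl a0, Sum.inr (Sum.inr b0), by omega⟩, ?_⟩
  refine sInf_le ?_
  refine ⟨L + 1, ⟨by omega, fun hzo => ?_⟩, rfl⟩
  have h3 : (H ^ (L + 2)) (Sum.inl a0) (Sum.inr (Sum.inr b0)) ≤ 1 :=
    hzo (Sum.inl a0) (Sum.inr (Sum.inr b0))
  omega
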